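/- For every ε > 0, the function 𝒯_ε is twice differentiable on (0, ∞) with 𝒯_ε''(p) > 0 for all p > 0 (i.e. 𝒯_ε is strictly convex), and consequently the eigenvalue map p ↦ λ₂^ε(p) = √(−1/𝒯_ε'(p)) is strictly increasing on (0, ∞) while p ↦ λ₁^ε(p) = −√(−1/𝒯_ε'(p)) is strictly decreasing; this expresses the genuine nonlinearity of both characteristic fields of the soft-congestion p-system. -/

import Mathlib

open Set Filter MeasureTheory Topology

/-- The singular pressure law `𝒫_ε(τ) = κ τ^{-γᵢ} + ε (τ-1)^{-γ_c}`. -/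
noncomputable def Pe (κ γi γc ε τ : ℝ) : ℝ := κ * τ ^ (-γi) + ε * (τ - 1) ^ (-γc)

/-- Derivative of the pressure law. -/
noncomputable def dPe (κ γi γc ε τ : ℝ) : ℝ :=
  κ * (-γi * τ ^ (-γi - 1)) + ε * (-γc * (τ - 1) ^ (-γc - 1))

/-- Second derivative of the pressure law. -/
noncomputable def d2Pe (κ γi γc ε τ : ℝ) : ℝ :=
  κ * (-γi * ((-γi - 1) * τ ^ (-γi - 2))) + ε * (-γc * ((-γc - 1) * (τ - 1) ^ (-γc - 2)))

lemma hasDerivAt_Pe (κ γi γc ε : ℝ) {τ : ℝ} (hτ : 1 < τ) :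
    HasDerivAt (Pe κ γi γc ε) (dPe κ γi γc ε τ) τ := by
  have hτ0 : τ ≠ 0 := by linarith
  have h1 : HasDerivAt (fun τ : ℝ => τ ^ (-γi)) (-γi * τ ^ (-γi - 1)) τ :=
    Real.hasDerivAt_rpow_const (Or.inl hτ0)
  have h2 : HasDerivAt (fun τ : ℝ => (τ - 1) ^ (-γc)) (-γc * (τ - 1) ^ (-γc - 1)) τ := by
    have h0 : τ - 1 ≠ 0 := by linarith
    have := (Real.hasDerivAt_rpow_const (x := τ - 1) (p := -γc) (Or.inl h0)).comp τ
      ((hasDerivAt_id τ).sub_const 1)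
    simpa [Function.comp_def] using this
  exact (h1.const_mul κ).add (h2.const_mul ε)

lemma hasDerivAt_dPe (κ γi γc ε : ℝ) {τ : ℝ} (hτ : 1 < τ) :
    HasDerivAt (dPe κ γi γc ε) (d2Pe κ γi γc ε τ) τ := by
  have hτ0 : τ ≠ 0 := by linarith
  have h1 : HasDerivAt (fun τ : ℝ => τ ^ (-γi - 1)) ((-γi - 1) * τ ^ (-γi - 2)) τ := by
    have := Real.hasDerivAt_rpow_const (x := τ) (p := -γi - 1) (Or.inl hτ0)
    rw [show -γi - 1 - 1 = -γi - 2 from by ring] at this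
    exact this
  have h2 : HasDerivAt (fun τ : ℝ => (τ - 1) ^ (-γc - 1)) ((-γc - 1) * (τ - 1) ^ (-γc - 2)) τ := by
    have h0 : τ - 1 ≠ 0 := by linarith
    have := (Real.hasDerivAt_rpow_const (x := τ - 1) (p := -γc - 1) (Or.inl h0)).comp τ
      ((hasDerivAt_id τ).sub_const 1)
    rw [show -γc - 1 - 1 = -γc - 2 from by ring] at this
    simpa [Function.comp_def] using this
  have H1 := ((h1.const_mul (-γi)).const_mul κ)
  have H2 := ((h2.const_mul (-γc)).const_mul ε)
  exact H1.add H2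

lemma dPe_neg {κ γi γc ε : ℝ} (hκ : 0 < κ) (hγi : 1 < γi) (hγc : 1 < γc) (hε : 0 < ε)
    {τ : ℝ} (hτ : 1 < τ) : dPe κ γi γc ε τ < 0 := by
  have hA : (0:ℝ) < τ ^ (-γi - 1) := Real.rpow_pos_of_pos (by linarith) _
  have hB : (0:ℝ) < (τ - 1) ^ (-γc - 1) := Real.rpow_pos_of_pos (by linarith) _
  have t1 : κ * (-γi * τ ^ (-γi - 1)) < 0 := by nlinarith [mul_pos (mul_pos hκ (show (0:ℝ) < γi by linarith)) hA]
  have t2 : ε * (-γc * (τ - 1) ^ (-γc - 1)) < 0 := by nlinarith [mul_pos (mul_pos hε (show (0:ℝ) < γc by linarith)) hB]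
  have := add_neg t1 t2
  simpa [dPe] using this

lemma d2Pe_pos {κ γi γc ε : ℝ} (hκ : 0 < κ) (hγi : 1 < γi) (hγc : 1 < γc) (hε : 0 < ε)
    {τ : ℝ} (hτ : 1 < τ) : 0 < d2Pe κ γi γc ε τ := by
  have hA : (0:ℝ) < τ ^ (-γi - 2) := Real.rpow_pos_of_pos (by linarith) _
  have hB : (0:ℝ) < (τ - 1) ^ (-γc - 2) := Real.rpow_pos_of_pos (by linarith) _
  have t1 : 0 < κ * (-γi * ((-γi - 1) * τ ^ (-γi - 2))) := by nlinarith [mul_pos (mul_pos (mul_pos hκ (show (0:ℝ) < γi by linarith)) (show (0:ℝ) < γi + 1 by linarith)) hA]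
  have t2 : 0 < ε * (-γc * ((-γc - 1) * (τ - 1) ^ (-γc - 2))) := by nlinarith [mul_pos (mul_pos (mul_pos hε (show (0:ℝ) < γc by linarith)) (show (0:ℝ) < γc + 1 by linarith)) hB]
  have := add_pos t1 t2
  simpa [d2Pe] using this

lemma Pe_pos {κ γi γc ε : ℝ} (hκ : 0 < κ) (hε : 0 < ε) {τ : ℝ} (hτ : 1 < τ) :
    0 < Pe κ γi γc ε τ :=
  add_pos (mul_pos hκ (Real.rpow_pos_of_pos (by linarith) _))
    (mul_pos hε (Real.rpow_pos_of_pos (by linarith) _))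

lemma Pe_strictAnti {κ γi γc ε : ℝ} (hκ : 0 < κ) (hγi : 1 < γi) (hγc : 1 < γc) (hε : 0 < ε) :
    StrictAntiOn (Pe κ γi γc ε) (Ioi 1) := by
  apply strictAntiOn_of_deriv_neg (convex_Ioi 1)
  · exact fun τ hτ => (hasDerivAt_Pe κ γi γc ε hτ).continuousAt.continuousWithinAt
  · intro τ hτ
    rw [interior_Ioi] at hτ
    rw [(hasDerivAt_Pe κ γi γc ε hτ).deriv]
    exact dPe_neg hκ hγi hγc hε hτ

/-- For every `ε > 0`, `𝒯_ε` is twice differentiable on `(0,∞)` with `𝒯_ε'' > 0`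
(strict convexity); consequently `p ↦ λ₂^ε(p) = √(-1/𝒯_ε'(p))` is strictly increasing
and `p ↦ λ₁^ε(p) = -√(-1/𝒯_ε'(p))` is strictly decreasing on `(0,∞)` (genuine
nonlinearity of both characteristic fields). -/
theorem stmt2 (κ γi γc : ℝ) (hκ : 0 < κ) (hγi : 1 < γi) (hγc : 1 < γc)
    (ε : ℝ) (hε : 0 < ε)
    (T : ℝ → ℝ) (hT : ∀ p > (0:ℝ), 1 < T p ∧ Pe κ γi γc ε (T p) = p) :
    (∀ p > (0:ℝ), HasDerivAt T (deriv T p) p ∧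
      HasDerivAt (deriv T) (deriv (deriv T) p) p ∧ 0 < deriv (deriv T) p) ∧
    StrictConvexOn ℝ (Ioi 0) T ∧
    StrictMonoOn (fun p => Real.sqrt (-1 / deriv T p)) (Ioi 0) ∧
    StrictAntiOn (fun p => -Real.sqrt (-1 / deriv T p)) (Ioi 0) := by
  have hanti := Pe_strictAnti (κ := κ) (γi := γi) (γc := γc) (ε := ε) hκ hγi hγc hε
  -- continuity of T on (0, ∞)
  have hcont : ∀ p > (0:ℝ), ContinuousAt T p := by
    intro p hp
    obtain ⟨hT1, hTe⟩ := hT p hp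
    rw [Metric.continuousAt_iff]
    intro η hη
    set η' : ℝ := min (η / 2) ((T p - 1) / 2) with hη'def
    have hη'pos : 0 < η' := lt_min (by linarith) (by linarith)
    have hη'le : η' ≤ (T p - 1) / 2 := min_le_right _ _
    have hη'le' : η' ≤ η / 2 := min_le_left _ _
    have h1lt : 1 < T p - η' := by linarith
    have h1lt' : 1 < T p + η' := by linarith
    have hlo : Pe κ γi γc ε (T p + η') < p := by
      have := hanti (mem_Ioi.2 hT1) (mem_Ioi.2 h1lt') (by linarith)
      rwa [hTe] at this
    have hhi : p < Pe κ γi γc ε (T p - η') := by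
      have := hanti (mem_Ioi.2 h1lt) (mem_Ioi.2 hT1) (by linarith)
      rwa [hTe] at this
    refine ⟨min (p - Pe κ γi γc ε (T p + η')) (Pe κ γi γc ε (T p - η') - p),
      lt_min (by linarith) (by linarith), ?_⟩
    intro x hx
    rw [Real.dist_eq] at hx
    have hx1 : Pe κ γi γc ε (T p + η') < x := by
      have := abs_lt.1 (lt_of_lt_of_le hx (min_le_left _ _))
      linarith [this.1]
    have hx2 : x < Pe κ γi γc ε (T p - η') := by
      have := abs_lt.1 (lt_of_lt_of_le hx (min_le_right _ _))
      linarith [this.2]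
    have hx0 : 0 < x := lt_trans (Pe_pos hκ hε h1lt') hx1
    obtain ⟨hTx1, hTxe⟩ := hT x hx0
    have hA : T p - η' < T x := by
      by_contra h
      push_neg at h
      have : Pe κ γi γc ε (T p - η') ≤ Pe κ γi γc ε (T x) :=
        hanti.antitoneOn (mem_Ioi.2 hTx1) (mem_Ioi.2 h1lt) h
      rw [hTxe] at this; linarith
    have hB : T x < T p + η' := by
      by_contra h
      push_neg at h
      have : Pe κ γi γc ε (T x) ≤ Pe κ γi γc ε (T p + η') :=
        hanti.antitoneOn (mem_Ioi.2 h1lt') (mem_Ioi.2 hTx1) h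
      rw [hTxe] at this; linarith
    rw [Real.dist_eq, abs_lt]
    constructor <;> linarith
  -- first derivative
  have hderivT : ∀ p > (0:ℝ), HasDerivAt T (dPe κ γi γc ε (T p))⁻¹ p := by
    intro p hp
    refine HasDerivAt.of_local_left_inverse (hcont p hp)
      (hasDerivAt_Pe κ γi γc ε (hT p hp).1) (dPe_neg hκ hγi hγc hε (hT p hp).1).ne ?_
    filter_upwards [Ioi_mem_nhds hp] with q hq using (hT q hq).2
  have hderivT_eq : ∀ p > (0:ℝ), deriv T p = (dPe κ γi γc ε (T p))⁻¹ :=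
    fun p hp => (hderivT p hp).deriv
  have hderivT_neg : ∀ p > (0:ℝ), deriv T p < 0 := by
    intro p hp
    rw [hderivT_eq p hp]
    exact inv_lt_zero.2 (dPe_neg hκ hγi hγc hε (hT p hp).1)
  -- second derivative
  have hderiv2 : ∀ p > (0:ℝ), HasDerivAt (deriv T)
      (-(d2Pe κ γi γc ε (T p) * (dPe κ γi γc ε (T p))⁻¹) / dPe κ γi γc ε (T p) ^ 2) p := by
    intro p hp
    have hcomp : HasDerivAt (fun q => dPe κ γi γc ε (T q))
        (d2Pe κ γi γc ε (T p) * (dPe κ γi γc ε (T p))⁻¹) p :=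
      (hasDerivAt_dPe κ γi γc ε (hT p hp).1).comp p (hderivT p hp)
    have hinv := hcomp.inv (dPe_neg hκ hγi hγc hε (hT p hp).1).ne
    refine hinv.congr_of_eventuallyEq ?_
    filter_upwards [Ioi_mem_nhds hp] with q hq using hderivT_eq q hq
  have hderiv2_pos : ∀ p > (0:ℝ), 0 < deriv (deriv T) p := by
    intro p hp
    rw [(hderiv2 p hp).deriv]
    have h2 := d2Pe_pos hκ hγi hγc hε (hT p hp).1
    have hn := dPe_neg hκ hγi hγc hε (hT p hp).1
    have hinvn : (dPe κ γi γc ε (T p))⁻¹ < 0 := inv_lt_zero.2 hn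
    have hnum : 0 < -(d2Pe κ γi γc ε (T p) * (dPe κ γi γc ε (T p))⁻¹) :=
      neg_pos.2 (mul_neg_of_pos_of_neg h2 hinvn)
    exact div_pos hnum (pow_two_pos_of_ne_zero hn.ne)
  have hpart1 : ∀ p > (0:ℝ), HasDerivAt T (deriv T p) p ∧
      HasDerivAt (deriv T) (deriv (deriv T) p) p ∧ 0 < deriv (deriv T) p := by
    intro p hp
    refine ⟨?_, ?_, hderiv2_pos p hp⟩
    · rw [(hderivT p hp).deriv]; exact hderivT p hp
    · rw [(hderiv2 p hp).deriv]; exact hderiv2 p hp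
  have hsm : StrictMonoOn (fun p => Real.sqrt (-1 / deriv T p)) (Ioi 0) := by
    have hmono : StrictMonoOn (deriv T) (Ioi 0) := by
      apply strictMonoOn_of_deriv_pos (convex_Ioi 0)
      · exact fun p hp => (hderiv2 p hp).continuousAt.continuousWithinAt
      · intro x hx
        rw [interior_Ioi] at hx
        exact hderiv2_pos x hx
    intro p hp q hq hpq
    have h1 := hmono hp hq hpq
    have hq0 := hderivT_neg q hq
    have hp0 := hderivT_neg p hp
    have hnonneg : 0 ≤ -1 / deriv T p :=
      (div_pos_iff.2 (Or.inr ⟨by norm_num, hp0⟩)).le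
    apply Real.sqrt_lt_sqrt hnonneg
    have : 1 / deriv T q < 1 / deriv T p := one_div_lt_one_div_of_neg_of_lt hq0 h1
    have e1 : -1 / deriv T p = -(1 / deriv T p) := by ring
    have e2 : -1 / deriv T q = -(1 / deriv T q) := by ring
    rw [e1, e2]
    linarith
  refine ⟨hpart1, ?_, hsm, ?_⟩
  · -- strict convexity
    apply strictConvexOn_of_deriv2_pos (convex_Ioi 0)
    · exact fun p hp => (hderivT p hp).continuousAt.continuousWithinAt
    · intro x hx
      rw [interior_Ioi] at hx
      simpa [Function.iterate_succ_apply', Function.iterate_zero_apply] using hderiv2_pos x hx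
  · -- strict antitonicity of λ₁
    intro p hp q hq hpq
    exact neg_lt_neg (hsm hp hq hpq)
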